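/- For every language L1 accepted by a GRLOWJFA there exists a GLLOWJFA accepting the reversal L1^R, and conversely; moreover the construction is: replace each rule (p,w,q) by (q,w^R,p) (keeping states, start state, and final states the same). -/

import Mathlib

open List

/-- Two-letter alphabet. -/
inductive AB : Type | a | b
  deriving DecidableEq, Repr

/-- Three-letter alphabet. -/
inductive ABC : Type | a | b | c
  deriving DecidableEq, Repr

instance : Fintype AB := ⟨⟨{AB.a, AB.b}, by decide⟩, by intro x; cases x <;> decide⟩
instance : Fintype ABC := ⟨⟨{ABC.a, ABC.b, ABC.c}, by decide⟩, by intro x; cases x <;> decide⟩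

/-- The Dyck language over the two designated letters `a` (open) and `b` (close):
balanced words using only `a` and `b`. -/
def Dyck {α : Type} [DecidableEq α] (a b : α) : Set (List α) :=
  {w | (∀ x ∈ w, x = a ∨ x = b) ∧ w.count a = w.count b ∧
       ∀ u, u <+: w → u.count b ≤ u.count a}

/-- `u` contains no word from `S` as a subword (infix). -/
def NoSub {α : Type} (S : Set (List α)) (u : List α) : Prop :=
  ¬ ∃ w ∈ S, w <:+: u

/-! ### Right one-way jumping finite automata -/

structure ROWJFA (α σ : Type) where
  start : σ
  accept : Set σ
  rules : Set (σ × α × σ)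
  det : ∀ p a q q', (p, a, q) ∈ rules → (p, a, q') ∈ rules → q = q'

namespace ROWJFA
variable {α σ : Type}

def sig (A : ROWJFA α σ) (p : σ) : Set α := {a | ∃ q, (p, a, q) ∈ A.rules}

/-- `p x a y ↷ q y x` when `(p,a,q) ∈ R` and `x ∈ (Σ∖Σ_p)*`. -/
inductive Step (A : ROWJFA α σ) : σ × List α → σ × List α → Prop
  | jump {p q : σ} {a : α} (x y : List α) :
      (p, a, q) ∈ A.rules → (∀ b ∈ x, b ∉ A.sig p) →
      Step A (p, x ++ a :: y) (q, y ++ x)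

def language (A : ROWJFA α σ) : Set (List α) :=
  {w | ∃ qf ∈ A.accept, Relation.ReflTransGen (Step A) (A.start, w) (qf, [])}

end ROWJFA

def ROWJ {α : Type} (L : Set (List α)) : Prop :=
  ∃ (σ : Type) (_ : Finite σ) (A : ROWJFA α σ), A.language = L

/-! ### Left one-way jumping finite automata -/

structure LOWJFA (α σ : Type) where
  start : σ
  accept : Set σ
  /-- A rule `(q, a, p)` means: from state `p`, delete `a`, move to state `q`. -/
  rules : Set (σ × α × σ)
  det : ∀ p a q q', (q, a, p) ∈ rules → (q', a, p) ∈ rules → q = q'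

namespace LOWJFA
variable {α σ : Type}

def sig (A : LOWJFA α σ) (p : σ) : Set α := {a | ∃ q, (q, a, p) ∈ A.rules}

/-- `x y q ↶ y a x p` when `(q,a,p) ∈ R` and `x ∈ (Σ∖Σ_p)*`;
configurations are in `Σ* Q`. -/
inductive Step (A : LOWJFA α σ) : List α × σ → List α × σ → Prop
  | jump {p q : σ} {a : α} (x y : List α) :
      (q, a, p) ∈ A.rules → (∀ b ∈ x, b ∉ A.sig p) →
      Step A (y ++ a :: x, p) (x ++ y, q)

def language (A : LOWJFA α σ) : Set (List α) :=
  {w | ∃ qf ∈ A.accept, Relation.ReflTransGen (Step A) (w, A.start) ([], qf)}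

end LOWJFA

def LOWJ {α : Type} (L : Set (List α)) : Prop :=
  ∃ (σ : Type) (_ : Finite σ) (A : LOWJFA α σ), A.language = L

/-! ### Generalized right linear one-way jumping finite automata -/

structure GRLOWJFA (α σ : Type) where
  start : σ
  accept : Set σ
  rules : Set (σ × List α × σ)
  finite : rules.Finite
  ne : ∀ r ∈ rules, r.2.1 ≠ ([] : List α)
  det : ∀ p w q q', (p, w, q) ∈ rules → (p, w, q') ∈ rules → q = q'

namespace GRLOWJFA
variable {α σ : Type}

def sig (A : GRLOWJFA α σ) (p : σ) : Set (List α) := {w | ∃ q, (p, w, q) ∈ A.rules}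

/-- Configurations are triples `(t, p, v)` representing `t p v ∈ Σ* Q Σ*`. -/
inductive Step (A : GRLOWJFA α σ) :
    List α × σ × List α → List α × σ × List α → Prop
  /-- `t p u x v ↷ t u q v`. -/
  | rule {p q : σ} {x : List α} (t u v : List α) :
      (p, x, q) ∈ A.rules →
      NoSub (A.sig p) u →
      (¬ ∃ u₂ x₁ : List α, u₂ ≠ [] ∧ x₁ ≠ [] ∧ u₂ <:+ u ∧ x₁ <+: x ∧ u₂ ++ x₁ = x) →
      Step A (t, p, u ++ x ++ v) (t ++ u, q, v)
  /-- `x p y ↷ p x y`. -/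
  | ret {p : σ} (x y : List α) :
      x ≠ [] → NoSub (A.sig p) y →
      Step A (x, p, y) ([], p, x ++ y)

def language (A : GRLOWJFA α σ) : Set (List α) :=
  {w | ∃ qf ∈ A.accept, Relation.ReflTransGen (Step A) ([], A.start, w) ([], qf, [])}

end GRLOWJFA

def GRLOWJ {α : Type} (L : Set (List α)) : Prop :=
  ∃ (σ : Type) (_ : Finite σ) (A : GRLOWJFA α σ), A.language = L

/-! ### Generalized left linear one-way jumping finite automata -/

structure GLLOWJFA (α σ : Type) where
  start : σ
  accept : Set σ
  /-- A rule `(q, w, p)` means: from state `p`, delete `w`, move to state `q`. -/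
  rules : Set (σ × List α × σ)
  finite : rules.Finite
  ne : ∀ r ∈ rules, r.2.1 ≠ ([] : List α)
  det : ∀ p w q q', (q, w, p) ∈ rules → (q', w, p) ∈ rules → q = q'

namespace GLLOWJFA
variable {α σ : Type}

def sig (A : GLLOWJFA α σ) (p : σ) : Set (List α) := {w | ∃ q, (q, w, p) ∈ A.rules}

/-- Configurations are triples `(v, p, t)` representing `v p t ∈ Σ* Q Σ*`. -/
inductive Step (A : GLLOWJFA α σ) :
    List α × σ × List α → List α × σ × List α → Prop
  /-- `v q u t ↶ v x u p t`. -/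
  | rule {p q : σ} {x : List α} (t u v : List α) :
      (q, x, p) ∈ A.rules →
      NoSub (A.sig p) u →
      (¬ ∃ x₂ u₁ : List α, x₂ ≠ [] ∧ u₁ ≠ [] ∧ x₂ <:+ x ∧ u₁ <+: u ∧ x₂ ++ u₁ = x) →
      Step A (v ++ x ++ u, p, t) (v, q, u ++ t)
  /-- `y x p ↶ y p x`. -/
  | ret {p : σ} (x y : List α) :
      x ≠ [] → NoSub (A.sig p) y →
      Step A (y, p, x) (y ++ x, p, [])

def language (A : GLLOWJFA α σ) : Set (List α) :=
  {w | ∃ qf ∈ A.accept, Relation.ReflTransGen (Step A) (w, A.start, []) ([], qf, [])}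

end GLLOWJFA

def GLLOWJ {α : Type} (L : Set (List α)) : Prop :=
  ∃ (σ : Type) (_ : Finite σ) (A : GLLOWJFA α σ), A.language = L

section Aux

variable {α σ : Type}

lemma mem_rules2 (A1 : GRLOWJFA α σ) (A2 : GLLOWJFA α σ)
    (hr : A2.rules = {r | ∃ p w q, (p, w, q) ∈ A1.rules ∧ r = (q, w.reverse, p)})
    (p q : σ) (w : List α) :
    (q, w, p) ∈ A2.rules ↔ (p, w.reverse, q) ∈ A1.rules := by
  rw [hr]
  constructor
  · rintro ⟨p0, w0, q0, h, heq⟩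
    simp only [Prod.mk.injEq] at heq
    obtain ⟨h1, h2, h3⟩ := heq
    subst h1 h3
    rw [h2, List.reverse_reverse]
    exact h
  · intro h
    exact ⟨p, w.reverse, q, h, by simp⟩

lemma sig_rev (A1 : GRLOWJFA α σ) (A2 : GLLOWJFA α σ)
    (hr : A2.rules = {r | ∃ p w q, (p, w, q) ∈ A1.rules ∧ r = (q, w.reverse, p)})
    (p : σ) : A2.sig p = {w | w.reverse ∈ A1.sig p} := by
  ext w
  simp only [GLLOWJFA.sig, GRLOWJFA.sig, Set.mem_setOf_eq]
  constructor
  · rintro ⟨q, h⟩; exact ⟨q, (mem_rules2 A1 A2 hr p q w).1 h⟩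
  · rintro ⟨q, h⟩; exact ⟨q, (mem_rules2 A1 A2 hr p q w).2 h⟩

lemma noSub_rev (S : Set (List α)) (u : List α) :
    NoSub {w | w.reverse ∈ S} u.reverse ↔ NoSub S u := by
  unfold NoSub
  constructor
  · rintro h ⟨w, hw, hinf⟩
    exact h ⟨w.reverse, by simpa using hw, by simpa using hinf⟩
  · rintro h ⟨w, hw, hinf⟩
    refine h ⟨w.reverse, hw, ?_⟩
    rw [← List.reverse_infix]; simpa using hinf

lemma stepGRtoGL (A1 : GRLOWJFA α σ) (A2 : GLLOWJFA α σ)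
    (hr : A2.rules = {r | ∃ p w q, (p, w, q) ∈ A1.rules ∧ r = (q, w.reverse, p)})
    (c c' : List α × σ × List α) (h : GRLOWJFA.Step A1 c c') :
    GLLOWJFA.Step A2 (c.2.2.reverse, c.2.1, c.1.reverse) (c'.2.2.reverse, c'.2.1, c'.1.reverse) := by
  cases h with
  | @rule p q x t u v hrule hu hov =>
    have hrule2 : (q, x.reverse, p) ∈ A2.rules := by
      rw [mem_rules2 A1 A2 hr]; simpa using hrule
    have hu2 : NoSub (A2.sig p) u.reverse := by
      rw [sig_rev A1 A2 hr, noSub_rev]; exact hu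
    have hov2 : ¬ ∃ x₂ u₁ : List α, x₂ ≠ [] ∧ u₁ ≠ [] ∧ x₂ <:+ x.reverse ∧
        u₁ <+: u.reverse ∧ x₂ ++ u₁ = x.reverse := by
      rintro ⟨x₂, u₁, hx2, hu1, hsx, hpu, heq⟩
      refine hov ⟨u₁.reverse, x₂.reverse, by simpa using hu1, by simpa using hx2, ?_, ?_, ?_⟩
      · have := List.reverse_suffix.mpr hpu; simpa using this
      · have := List.reverse_prefix.mpr hsx; simpa using this
      · have := congrArg List.reverse heq
        simpa using this
    have := GLLOWJFA.Step.rule (A := A2) t.reverse u.reverse v.reverse hrule2 hu2 hov2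
    simpa using this
  | @ret p x y hx hy =>
    have hy2 : NoSub (A2.sig p) y.reverse := by
      rw [sig_rev A1 A2 hr, noSub_rev]; exact hy
    have := GLLOWJFA.Step.ret (A := A2) x.reverse y.reverse (by simpa using hx) hy2
    simpa using this

lemma stepGLtoGR (A1 : GRLOWJFA α σ) (A2 : GLLOWJFA α σ)
    (hr : A2.rules = {r | ∃ p w q, (p, w, q) ∈ A1.rules ∧ r = (q, w.reverse, p)})
    (c c' : List α × σ × List α) (h : GLLOWJFA.Step A2 c c') :
    GRLOWJFA.Step A1 (c.2.2.reverse, c.2.1, c.1.reverse) (c'.2.2.reverse, c'.2.1, c'.1.reverse) := by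
  cases h with
  | @rule p q x t u v hrule hu hov =>
    have hrule2 : (p, x.reverse, q) ∈ A1.rules := (mem_rules2 A1 A2 hr p q x).1 hrule
    have hu2 : NoSub (A1.sig p) u.reverse := by
      have : NoSub {w | List.reverse w ∈ A1.sig p} u := by rw [← sig_rev A1 A2 hr]; exact hu
      rw [← noSub_rev (A1.sig p) u.reverse]
      simp only [List.reverse_reverse]
      exact this
    have hov2 : ¬ ∃ u₂ x₁ : List α, u₂ ≠ [] ∧ x₁ ≠ [] ∧ u₂ <:+ u.reverse ∧
        x₁ <+: x.reverse ∧ u₂ ++ x₁ = x.reverse := by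
      rintro ⟨u₂, x₁, hu2', hx1, hsu, hpx, heq⟩
      refine hov ⟨x₁.reverse, u₂.reverse, by simpa using hx1, by simpa using hu2', ?_, ?_, ?_⟩
      · have := List.reverse_suffix.mpr hpx; simpa using this
      · have := List.reverse_prefix.mpr hsu; simpa using this
      · have := congrArg List.reverse heq
        simpa using this
    have := GRLOWJFA.Step.rule (A := A1) t.reverse u.reverse v.reverse hrule2 hu2 hov2
    simpa using this
  | @ret p x y hx hy =>
    have hy2 : NoSub (A1.sig p) y.reverse := by
      have : NoSub {w | List.reverse w ∈ A1.sig p} y := by rw [← sig_rev A1 A2 hr]; exact hy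
      rw [← noSub_rev (A1.sig p) y.reverse]
      simp only [List.reverse_reverse]
      exact this
    have := GRLOWJFA.Step.ret (A := A1) x.reverse y.reverse (by simpa using hx) hy2
    simpa using this

lemma lang_rev (A1 : GRLOWJFA α σ) (A2 : GLLOWJFA α σ)
    (hs : A2.start = A1.start) (ha : A2.accept = A1.accept)
    (hr : A2.rules = {r | ∃ p w q, (p, w, q) ∈ A1.rules ∧ r = (q, w.reverse, p)}) :
    A2.language = {w | w.reverse ∈ A1.language} := by
  ext w
  simp only [GLLOWJFA.language, GRLOWJFA.language, Set.mem_setOf_eq, hs, ha]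
  constructor
  · rintro ⟨qf, hqf, hrt⟩
    refine ⟨qf, hqf, ?_⟩
    have := Relation.ReflTransGen.lift
      (fun c : List α × σ × List α => (c.2.2.reverse, c.2.1, c.1.reverse))
      (stepGLtoGR A1 A2 hr) _ _ hrt
    simpa [Function.onFun] using this
  · rintro ⟨qf, hqf, hrt⟩
    refine ⟨qf, hqf, ?_⟩
    have := Relation.ReflTransGen.lift
      (fun c : List α × σ × List α => (c.2.2.reverse, c.2.1, c.1.reverse))
      (stepGRtoGL A1 A2 hr) _ _ hrt
    simpa [Function.onFun] using this

/-- Reverse construction: from a GRLOWJFA build a GLLOWJFA. -/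
def revGR (A1 : GRLOWJFA α σ) : GLLOWJFA α σ where
  start := A1.start
  accept := A1.accept
  rules := {r | ∃ p w q, (p, w, q) ∈ A1.rules ∧ r = (q, w.reverse, p)}
  finite := by
    have : {r | ∃ p w q, (p, w, q) ∈ A1.rules ∧ r = (q, w.reverse, p)} =
        (fun r : σ × List α × σ => (r.2.2, r.2.1.reverse, r.1)) '' A1.rules := by
      ext r
      constructor
      · rintro ⟨p, w, q, h, rfl⟩; exact ⟨(p, w, q), h, rfl⟩
      · rintro ⟨⟨p, w, q⟩, h, rfl⟩; exact ⟨p, w, q, h, rfl⟩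
    rw [this]
    exact A1.finite.image _
  ne := by
    rintro r ⟨p, w, q, h, rfl⟩
    simpa using A1.ne _ h
  det := by
    rintro p w q q' h h'
    obtain ⟨p1, w1, q1, h1, he1⟩ := h
    obtain ⟨p2, w2, q2, h2, he2⟩ := h'
    simp only [Prod.mk.injEq] at he1 he2
    obtain ⟨rfl, hw1, rfl⟩ := he1
    obtain ⟨rfl, hw2, rfl⟩ := he2
    have : w1 = w2 := by
      have := hw1.symm.trans hw2
      simpa using congrArg List.reverse this
    subst this
    exact A1.det _ _ _ _ h1 h2

/-- Reverse construction: from a GLLOWJFA build a GRLOWJFA. -/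
def revGL (A2 : GLLOWJFA α σ) : GRLOWJFA α σ where
  start := A2.start
  accept := A2.accept
  rules := {r | ∃ q w p, (q, w, p) ∈ A2.rules ∧ r = (p, w.reverse, q)}
  finite := by
    have : {r | ∃ q w p, (q, w, p) ∈ A2.rules ∧ r = (p, w.reverse, q)} =
        (fun r : σ × List α × σ => (r.2.2, r.2.1.reverse, r.1)) '' A2.rules := by
      ext r
      constructor
      · rintro ⟨q, w, p, h, rfl⟩; exact ⟨(q, w, p), h, rfl⟩
      · rintro ⟨⟨q, w, p⟩, h, rfl⟩; exact ⟨q, w, p, h, rfl⟩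
    rw [this]
    exact A2.finite.image _
  ne := by
    rintro r ⟨q, w, p, h, rfl⟩
    simpa using A2.ne _ h
  det := by
    rintro p w q q' h h'
    obtain ⟨q1, w1, p1, h1, he1⟩ := h
    obtain ⟨q2, w2, p2, h2, he2⟩ := h'
    simp only [Prod.mk.injEq] at he1 he2
    obtain ⟨rfl, hw1, rfl⟩ := he1
    obtain ⟨rfl, hw2, rfl⟩ := he2
    have : w1 = w2 := by
      have := hw1.symm.trans hw2
      simpa using congrArg List.reverse this
    subst this
    exact A2.det _ _ _ _ h1 h2

lemma revGL_hr (A2 : GLLOWJFA α σ) :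
    A2.rules = {r | ∃ p w q, (p, w, q) ∈ (revGL A2).rules ∧ r = (q, w.reverse, p)} := by
  ext ⟨q, w, p⟩
  constructor
  · intro h
    exact ⟨p, w.reverse, q, ⟨q, w, p, h, rfl⟩, by simp⟩
  · rintro ⟨p0, w0, q0, ⟨q1, w1, p1, h1, he1⟩, he2⟩
    simp only [Prod.mk.injEq] at he1 he2
    obtain ⟨rfl, hw0, rfl⟩ := he1
    obtain ⟨rfl, hw, rfl⟩ := he2
    have : w = w1 := by rw [hw, hw0, List.reverse_reverse]
    subst this
    exact h1

end Aux

theorem stmt_6 :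
    (∀ (α : Type) (L : Set (List α)), GRLOWJ L → GLLOWJ {w | w.reverse ∈ L}) ∧
    (∀ (α : Type) (L : Set (List α)), GLLOWJ L → GRLOWJ {w | w.reverse ∈ L}) ∧
    (∀ (α σ : Type) (A1 : GRLOWJFA α σ) (A2 : GLLOWJFA α σ),
      A2.start = A1.start → A2.accept = A1.accept →
      A2.rules = {r | ∃ p w q, (p, w, q) ∈ A1.rules ∧ r = (q, w.reverse, p)} →
      A2.language = {w | w.reverse ∈ A1.language}) := by
  refine ⟨?_, ?_, ?_⟩
  · rintro α L ⟨σ, hfin, A1, rfl⟩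
    exact ⟨σ, hfin, revGR A1, lang_rev A1 (revGR A1) rfl rfl rfl⟩
  · rintro α L ⟨σ, hfin, A2, rfl⟩
    refine ⟨σ, hfin, revGL A2, ?_⟩
    have h := lang_rev (revGL A2) A2 rfl rfl (revGL_hr A2)
    ext w
    have hw : w.reverse ∈ A2.language ↔ w.reverse.reverse ∈ (revGL A2).language := by
      rw [h]; rfl
    simp only [Set.mem_setOf_eq, hw, List.reverse_reverse]
  · intro α σ A1 A2 hs ha hr
    exact lang_rev A1 A2 hs ha hr
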